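/- arXiv:2207.07704 — 2 statements merged into one kernel-verified Lean document; each statement's English description precedes it below -/
import Mathlib

section
/- Let y₁,…,yₙ be real numbers in [0,1] and let x be a real number with 0 ≤ x ≤ 1 and x ≤ ∑_{j=1}^n y_j. Then 1 - ∏_{j=1}^n (1 - y_j) ≥ (1 - 1/e) · x. -/
theorem stmt_3 (n : ℕ) (y : Fin n → ℝ) (hy : ∀ j, 0 ≤ y j ∧ y j ≤ 1)
    (x : ℝ) (hx0 : 0 ≤ x) (hx1 : x ≤ 1) (hxy : x ≤ ∑ j, y j) :
    1 - ∏ j, (1 - y j) ≥ (1 - 1 / Real.exp 1) * x := by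
  have hprod : ∏ j, (1 - y j) ≤ Real.exp (-x) := by
    calc ∏ j, (1 - y j) ≤ ∏ j, Real.exp (-(y j)) := by
          apply Finset.prod_le_prod
          · intro j _; linarith [(hy j).2]
          · intro j _; linarith [Real.add_one_le_exp (-(y j))]
      _ = Real.exp (∑ j, -(y j)) := (Real.exp_sum _ _).symm
      _ ≤ Real.exp (-x) := by
          apply Real.exp_le_exp.2
          rw [Finset.sum_neg_distrib]
          linarith
  have hconv : Real.exp (-x) ≤ x * Real.exp (-1) + (1 - x) * 1 := by
    have := convexOn_exp.2 (Set.mem_univ (-1)) (Set.mem_univ 0) hx0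
      (by linarith : (0:ℝ) ≤ 1 - x) (by ring)
    simpa using this
  have he : Real.exp (-1) = 1 / Real.exp 1 := by
    rw [Real.exp_neg]; ring
  nlinarith [hprod, hconv]
end

section
/- Suppose two groups g₁, g₂ have LP values satisfying (1/|g₁|)∑_{l∈g₁} c_l x_l = (1/|g₂|)∑_{l∈g₂} c_l x_l with all c_l ≥ 0, x_l ≥ 0, and the common value positive. If random indicators X_l satisfy (1-1/e)x_l ≤ E[X_l] ≤ 2x_l, then the ratio of expected group averages R = [(1/|g₁|)∑_{l∈g₁} c_l E[X_l]] / [(1/|g₂|)∑_{l∈g₂} c_l E[X_l]] satisfies (1-1/e)/2 ≤ R ≤ 2/(1-1/e). -/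
theorem stmt_17 {ι : Type*} (g₁ g₂ : Finset ι) (hg₁ : g₁.Nonempty) (hg₂ : g₂.Nonempty)
    (c x EX : ι → ℝ)
    (hc : ∀ l, 0 ≤ c l) (hx : ∀ l, 0 ≤ x l)
    (heq : (∑ l ∈ g₁, c l * x l) / g₁.card = (∑ l ∈ g₂, c l * x l) / g₂.card)
    (hpos : 0 < (∑ l ∈ g₂, c l * x l) / g₂.card)
    (hlo : ∀ l, (1 - 1 / Real.exp 1) * x l ≤ EX l) (hhi : ∀ l, EX l ≤ 2 * x l)
    (hden : 0 < (∑ l ∈ g₂, c l * EX l) / g₂.card) :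
    (1 - 1 / Real.exp 1) / 2 ≤
      ((∑ l ∈ g₁, c l * EX l) / g₁.card) / ((∑ l ∈ g₂, c l * EX l) / g₂.card) ∧
    ((∑ l ∈ g₁, c l * EX l) / g₁.card) / ((∑ l ∈ g₂, c l * EX l) / g₂.card) ≤
      2 / (1 - 1 / Real.exp 1) := by
  set α : ℝ := 1 - 1 / Real.exp 1 with hα
  have hαpos : 0 < α := by
    have h0 : (1:ℝ) < Real.exp 1 := by
      have := Real.add_one_lt_exp (x := 1) one_ne_zero
      linarith
    have h1 : 1 / Real.exp 1 < 1 := by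
      rw [div_lt_one (by positivity)]; exact h0
    rw [hα]; linarith
  have hc₁ : (0:ℝ) < g₁.card := by exact_mod_cast Finset.card_pos.mpr hg₁
  have hc₂ : (0:ℝ) < g₂.card := by exact_mod_cast Finset.card_pos.mpr hg₂
  set S : ℝ := (∑ l ∈ g₂, c l * x l) / g₂.card with hS
  have key : ∀ g : Finset ι, (0:ℝ) < g.card →
      α * ((∑ l ∈ g, c l * x l) / g.card) ≤ (∑ l ∈ g, c l * EX l) / g.card ∧
      (∑ l ∈ g, c l * EX l) / g.card ≤ 2 * ((∑ l ∈ g, c l * x l) / g.card) := by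
    intro g hg
    have hlo' : α * (∑ l ∈ g, c l * x l) ≤ ∑ l ∈ g, c l * EX l := by
      rw [Finset.mul_sum]
      apply Finset.sum_le_sum
      intro i _
      have := hlo i
      nlinarith [hc i, mul_le_mul_of_nonneg_left this (hc i)]
    have hhi' : ∑ l ∈ g, c l * EX l ≤ 2 * (∑ l ∈ g, c l * x l) := by
      rw [Finset.mul_sum]
      apply Finset.sum_le_sum
      intro i _
      nlinarith [hc i, mul_le_mul_of_nonneg_left (hhi i) (hc i)]
    constructor
    · rw [mul_div_assoc']
      exact div_le_div_of_nonneg_right hlo' hg.le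
    · rw [mul_div_assoc']
      exact div_le_div_of_nonneg_right hhi' hg.le
  obtain ⟨h1lo, h1hi⟩ := key g₁ hc₁
  obtain ⟨h2lo, h2hi⟩ := key g₂ hc₂
  rw [heq] at h1lo h1hi
  -- now: αS ≤ A1 ≤ 2S, αS ≤ A2 ≤ 2S
  set A1 := (∑ l ∈ g₁, c l * EX l) / g₁.card
  set A2 := (∑ l ∈ g₂, c l * EX l) / g₂.card
  rw [← hS] at h2lo h2hi
  have hSpos : 0 < S := hpos
  constructor
  · rw [div_le_div_iff₀ two_pos hden]
    nlinarith [h1lo, h2hi, hSpos, hαpos]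
  · rw [div_le_div_iff₀ hden hαpos]
    nlinarith [h1hi, h2lo, hSpos, hαpos]
end
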